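/- arXiv:1011.0454 — 3 statements merged into one kernel-verified Lean document; each statement's English description precedes it below -/
import Mathlib

section
/- In S = K[X_1,Y_1,Z_1,...,X_N,Y_N,Z_N] with derivation Δ(Z_i)=Y_i, Δ(Y_i)=X_i, Δ(X_i)=0, for i < j the element G_{{i,j}} = X_i Z_j - Y_i Y_j + Z_i X_j satisfies Δ(G_{{i,j}}) = 0, and for i < j < k the element G_{{i,j,k}} = det of the matrix with rows (X_i,Y_i,Z_i),(X_j,Y_j,Z_j),(X_k,Y_k,Z_k) satisfies Δ(G_{{i,j,k}}) = 0. -/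
/-- In S = K[X₁,Y₁,Z₁,…,X_N,Y_N,Z_N] with Δ(Zᵢ)=Yᵢ, Δ(Yᵢ)=Xᵢ, Δ(Xᵢ)=0,
for i < j the element G_{i,j} = XᵢZⱼ - YᵢYⱼ + ZᵢXⱼ is a Δ-constant, and for i < j < k
the 3×3 determinant G_{i,j,k} is a Δ-constant.
Variables: X (i,0) = Xᵢ, X (i,1) = Yᵢ, X (i,2) = Zᵢ. -/
theorem G_constants (K : Type) [Field K] [CharZero K] (N : ℕ)
    (D : Derivation K (MvPolynomial (Fin N × Fin 3) K) (MvPolynomial (Fin N × Fin 3) K))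
    (hx : ∀ i : Fin N, D (MvPolynomial.X (i, 0)) = 0)
    (hy : ∀ i : Fin N, D (MvPolynomial.X (i, 1)) = MvPolynomial.X (i, 0))
    (hz : ∀ i : Fin N, D (MvPolynomial.X (i, 2)) = MvPolynomial.X (i, 1)) :
    (∀ i j : Fin N, i < j →
      D (MvPolynomial.X (i, 0) * MvPolynomial.X (j, 2)
          - MvPolynomial.X (i, 1) * MvPolynomial.X (j, 1)
          + MvPolynomial.X (i, 2) * MvPolynomial.X (j, 0)) = 0) ∧
    (∀ i j k : Fin N, i < j → j < k →
      D (Matrix.det !![MvPolynomial.X (i, 0), MvPolynomial.X (i, 1), MvPolynomial.X (i, 2);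
                       MvPolynomial.X (j, 0), MvPolynomial.X (j, 1), MvPolynomial.X (j, 2);
                       MvPolynomial.X (k, 0), MvPolynomial.X (k, 1), MvPolynomial.X (k, 2)]) = 0) := by
  constructor
  · intro i j _
    simp only [map_add, map_sub, Derivation.leibniz, hx, hy, hz, smul_eq_mul]
    ring
  · intro i j k _ _
    rw [Matrix.det_fin_three]
    simp only [Matrix.cons_val', Matrix.cons_val_zero, Matrix.cons_val_one, Matrix.head_cons,
      Matrix.head_fin_const, Matrix.cons_val_fin_one, Matrix.empty_val', Matrix.cons_val_two,
      Matrix.tail_cons, Matrix.of_apply]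
    simp only [map_add, map_sub, Derivation.leibniz, hx, hy, hz, smul_eq_mul]
    ring
end

section
/- Define F_{{i}} = X_i, F_{{i,j}} = X_i Y_j - X_j Y_i, G_{{i,j}} = X_i Z_j - Y_i Y_j + Z_i X_j, G_{{i,j,k}} the 3×3 determinant, and inductively for t ≥ 3 and i_1 < i_2 < ... < i_t, F_{{i_1,...,i_t}} = F_{{i_2,i_4,i_5,...,i_t}} G_{{i_1,i_3}} - F_{{i_1,i_4,i_5,...,i_t}} G_{{i_2,i_3}}, and similarly for G with t ≥ 4. Then Δ(F_I) = 0 and Δ(G_I) = 0 for all such index sets I. -/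
variable (K : Type) [Field K] (N : ℕ)

/-- Xᵢ in S = K[X₁,Y₁,Z₁,…]: the variable X (i,0). -/
noncomputable def XX (i : Fin N) : MvPolynomial (Fin N × Fin 3) K := MvPolynomial.X (i, 0)
/-- Yᵢ: the variable X (i,1). -/
noncomputable def YY (i : Fin N) : MvPolynomial (Fin N × Fin 3) K := MvPolynomial.X (i, 1)
/-- Zᵢ: the variable X (i,2). -/
noncomputable def ZZ (i : Fin N) : MvPolynomial (Fin N × Fin 3) K := MvPolynomial.X (i, 2)

/-- G_{i,j} = XᵢZⱼ - YᵢYⱼ + ZᵢXⱼ. -/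
noncomputable def Gpair (i j : Fin N) : MvPolynomial (Fin N × Fin 3) K :=
  XX K N i * ZZ K N j - YY K N i * YY K N j + ZZ K N i * XX K N j

/-- The family F_I, indexed by (sorted) lists: F_{i}=Xᵢ, F_{i,j}=XᵢYⱼ-XⱼYᵢ, and for t ≥ 3
F_{i₁,…,i_t} = F_{i₂,i₄,…,i_t} G_{i₁,i₃} - F_{i₁,i₄,…,i_t} G_{i₂,i₃}. -/
noncomputable def FF : List (Fin N) → MvPolynomial (Fin N × Fin 3) K
  | [] => 0
  | [i] => XX K N i
  | [i, j] => XX K N i * YY K N j - XX K N j * YY K N i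
  | i1 :: i2 :: i3 :: rest =>
      FF (i2 :: rest) * Gpair K N i1 i3 - FF (i1 :: rest) * Gpair K N i2 i3
termination_by l => l.length

/-- The family G_I: G_{i,j} as above, G_{i,j,k} the 3×3 determinant, and for t ≥ 4
G_{i₁,…,i_t} = G_{i₂,i₄,…,i_t} G_{i₁,i₃} - G_{i₁,i₄,…,i_t} G_{i₂,i₃}. -/
noncomputable def GG : List (Fin N) → MvPolynomial (Fin N × Fin 3) K
  | [] => 0
  | [_] => 0
  | [i, j] => Gpair K N i j
  | [i, j, k] =>
      Matrix.det !![XX K N i, YY K N i, ZZ K N i;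
                    XX K N j, YY K N j, ZZ K N j;
                    XX K N k, YY K N k, ZZ K N k]
  | i1 :: i2 :: i3 :: i4 :: rest =>
      GG (i2 :: i4 :: rest) * Gpair K N i1 i3 - GG (i1 :: i4 :: rest) * Gpair K N i2 i3
termination_by l => l.length


section
variable (D : Derivation K (MvPolynomial (Fin N × Fin 3) K) (MvPolynomial (Fin N × Fin 3) K))
  (hx : ∀ i : Fin N, D (XX K N i) = 0)
  (hy : ∀ i : Fin N, D (YY K N i) = XX K N i)
  (hz : ∀ i : Fin N, D (ZZ K N i) = YY K N i)

include hx hy hz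

lemma DGpair (i j : Fin N) : D (Gpair K N i j) = 0 := by
  simp [Gpair, Derivation.leibniz, hx, hy, hz, smul_eq_mul]
  ring

lemma DFF : ∀ l : List (Fin N), D (FF K N l) = 0
  | [] => by simp [FF]
  | [i] => by simp [FF, hx]
  | [i, j] => by
      simp [FF, Derivation.leibniz, hx, hy, smul_eq_mul]; ring
  | i1 :: i2 :: i3 :: rest => by
      rw [FF]
      simp [Derivation.leibniz, DFF (i2 :: rest), DFF (i1 :: rest), DGpair K N D hx hy hz]
termination_by l => l.length

lemma DGG : ∀ l : List (Fin N), D (GG K N l) = 0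
  | [] => by simp [GG]
  | [i] => by simp [GG]
  | [i, j] => by rw [GG]; exact DGpair K N D hx hy hz i j
  | [i, j, k] => by
      rw [GG]
      simp [Matrix.det_fin_three, Matrix.cons_val_zero, Matrix.cons_val_one,
        Derivation.leibniz, hx, hy, hz, smul_eq_mul]
      ring
  | i1 :: i2 :: i3 :: i4 :: rest => by
      rw [GG]
      simp [Derivation.leibniz, DGG (i2 :: i4 :: rest), DGG (i1 :: i4 :: rest), DGpair K N D hx hy hz]
termination_by l => l.length

end

/-- Δ(F_I) = 0 and Δ(G_I) = 0 for all sorted index sets I (with Δ the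
Weitzenböck derivation Δ(Zᵢ)=Yᵢ, Δ(Yᵢ)=Xᵢ, Δ(Xᵢ)=0). -/
theorem FF_GG_constants (K : Type) [Field K] [CharZero K] (N : ℕ)
    (D : Derivation K (MvPolynomial (Fin N × Fin 3) K) (MvPolynomial (Fin N × Fin 3) K))
    (hx : ∀ i : Fin N, D (XX K N i) = 0)
    (hy : ∀ i : Fin N, D (YY K N i) = XX K N i)
    (hz : ∀ i : Fin N, D (ZZ K N i) = YY K N i) :
    (∀ l : List (Fin N), l.Chain' (· < ·) → l ≠ [] → D (FF K N l) = 0) ∧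
    (∀ l : List (Fin N), l.Chain' (· < ·) → 2 ≤ l.length → D (GG K N l) = 0) := by
  exact ⟨fun l _ _ => DFF K N D hx hy hz l, fun l _ _ => DGG K N D hx hy hz l⟩
end

section
/- With the lexicographic monomial order determined by Z_N > Y_N > X_N > Z_{N-1} > ... > Z_1 > Y_1 > X_1, for 1 ≤ i_1 < i_2 < ... < i_t ≤ N with t ≥ 2, the leading monomial of F_{{i_1,...,i_t}} is X_{i_1} Y_{i_2} Y_{i_3} ··· Y_{i_t}, and more precisely F_{{i_1,...,i_t}} = X_{i_1} Y_{i_2} ··· Y_{i_t} - Y_{i_1} X_{i_2} Y_{i_3} ··· Y_{i_t} + (lower order terms). -/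
variable (K : Type) [Field K] (N : ℕ)

/-- Rank of a variable in the order Z_N > Y_N > X_N > ⋯ > Z₁ > Y₁ > X₁:
higher rank = larger variable (coordinate 0 = X, 1 = Y, 2 = Z). -/
def rankVar {N : ℕ} (v : Fin N × Fin 3) : ℕ := 3 * (v.1 : ℕ) + (v.2 : ℕ)

/-- Lexicographic comparison of monomials (exponent vectors) for this variable order:
m is lower order than m' iff at the largest variable where they differ, m has the
smaller exponent. -/
def monLT {N : ℕ} (m m' : (Fin N × Fin 3) →₀ ℕ) : Prop :=
  ∃ v : Fin N × Fin 3, m v < m' v ∧ ∀ w : Fin N × Fin 3, rankVar v < rankVar w → m w = m' w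

/-- The exponent vector of the monomial Y_{i₁} ⋯ Y_{i_t} for a list of indices. -/
noncomputable def Ymon {N : ℕ} (l : List (Fin N)) : (Fin N × Fin 3) →₀ ℕ :=
  (l.map (fun i => Finsupp.single ((i, 1) : Fin N × Fin 3) 1)).sum

open MvPolynomial

section Helpers
variable {N : ℕ}

lemma rank_pair (i : Fin N) (s : Fin 3) : rankVar (i, s) = 3*(i:ℕ) + (s:ℕ) := rfl

lemma fv0 : ((0:Fin 3):ℕ) = 0 := rfl
lemma fv1 : ((1:Fin 3):ℕ) = 1 := rfl
lemma fv2 : ((2:Fin 3):ℕ) = 2 := rfl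

lemma rankVar_injective : Function.Injective (rankVar (N := N)) := by
  rintro ⟨v1, v2⟩ ⟨w1, w2⟩ h
  simp only [rankVar] at h
  have h2 := v2.isLt; have h3 := w2.isLt
  have hv : (v1:ℕ) = w1 ∧ (v2:ℕ) = w2 := by omega
  simp [Prod.ext_iff, Fin.ext_iff, hv.1, hv.2]

lemma monLT_irrefl (m : (Fin N × Fin 3) →₀ ℕ) : ¬ monLT m m := by
  rintro ⟨v, h, -⟩; exact lt_irrefl _ h

lemma monLT_ne {m m' : (Fin N × Fin 3) →₀ ℕ} (h : monLT m m') : m ≠ m' := by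
  rintro rfl; exact monLT_irrefl m h

lemma monLT_trans {m1 m2 m3 : (Fin N × Fin 3) →₀ ℕ} (h1 : monLT m1 m2) (h2 : monLT m2 m3) :
    monLT m1 m3 := by
  obtain ⟨v, hv, hvh⟩ := h1
  obtain ⟨u, hu, huh⟩ := h2
  rcases lt_trichotomy (rankVar v) (rankVar u) with h | h | h
  · exact ⟨u, (hvh u h) ▸ hu, fun w hw => (hvh w (h.trans hw)).trans (huh w hw)⟩
  · obtain rfl := rankVar_injective h
    exact ⟨v, hv.trans hu, fun w hw => (hvh w hw).trans (huh w hw)⟩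
  · exact ⟨v, hv.trans_le (huh v h).le, fun w hw => (hvh w hw).trans (huh w (h.trans hw))⟩

lemma monLT_add_right {m m' : (Fin N × Fin 3) →₀ ℕ} (h : monLT m m') (g : (Fin N × Fin 3) →₀ ℕ) :
    monLT (m + g) (m' + g) := by
  obtain ⟨v, hv, hh⟩ := h
  exact ⟨v, by simp only [Finsupp.add_apply]; omega,
    fun w hw => by simp only [Finsupp.add_apply, hh w hw]⟩

lemma monLT_add_left {m m' : (Fin N × Fin 3) →₀ ℕ} (h : monLT m m') (g : (Fin N × Fin 3) →₀ ℕ) :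
    monLT (g + m) (g + m') := by
  obtain ⟨v, hv, hh⟩ := h
  exact ⟨v, by simp only [Finsupp.add_apply]; omega,
    fun w hw => by simp only [Finsupp.add_apply, hh w hw]⟩

lemma Ymon_nil : (Ymon ([] : List (Fin N))) = 0 := rfl

lemma Ymon_cons (i : Fin N) (l : List (Fin N)) :
    Ymon (i :: l) = Finsupp.single ((i,1) : Fin N × Fin 3) 1 + Ymon l := by
  simp [Ymon]

lemma Ymon_apply_not_mem (l : List (Fin N)) (v : Fin N × Fin 3) (h : v.1 ∉ l) : Ymon l v = 0 := by
  induction l with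
  | nil => simp [Ymon]
  | cons i l ih =>
    rw [Ymon_cons, Finsupp.add_apply, ih (fun hm => h (List.mem_cons_of_mem _ hm)),
      Finsupp.single_apply, if_neg, add_zero]
    rintro rfl
    exact h (List.mem_cons_self)

lemma single_hi {u v w : Fin N × Fin 3} (h : rankVar u ≤ rankVar v) (hw : rankVar v < rankVar w) :
    Finsupp.single u (1:ℕ) w = 0 :=
  Finsupp.single_eq_of_ne (fun he => by subst he; omega)

end Helpers
section Compare
variable {N : ℕ}

/-- Comparison at position (b,1). -/
lemma lt_m2_of (a c b : Fin N) (rest2 : List (Fin N))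
    (m : (Fin N × Fin 3) →₀ ℕ) (hac : a < c) (hcb : c < b)
    (hb : m ((b, 1) : Fin N × Fin 3) = 0)
    (hhigh : ∀ w, rankVar ((b,1) : Fin N × Fin 3) < rankVar w → m w = Ymon rest2 w) :
    monLT m (Finsupp.single ((a,1) : Fin N × Fin 3) 1 + Finsupp.single ((c,0) : Fin N × Fin 3) 1
      + Ymon (b :: rest2)) := by
  have hab : (a:ℕ) < (b:ℕ) := hac.trans hcb
  have hcb' : (c:ℕ) < (b:ℕ) := hcb
  refine ⟨(b,1), ?_, ?_⟩
  · rw [hb]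
    have h1 : Finsupp.single ((a,1) : Fin N × Fin 3) 1 ((b,1) : Fin N × Fin 3) = 0 :=
      Finsupp.single_eq_of_ne (by simp [Prod.ext_iff]; omega)
    have h2 : Finsupp.single ((c,0) : Fin N × Fin 3) 1 ((b,1) : Fin N × Fin 3) = 0 :=
      Finsupp.single_eq_of_ne (by simp [Prod.ext_iff])
    rw [Finsupp.add_apply, Finsupp.add_apply, h1, h2, Ymon_cons, Finsupp.add_apply,
      Finsupp.single_eq_same]
    omega
  · intro w hw
    have h1 : Finsupp.single ((a,1) : Fin N × Fin 3) 1 w = 0 :=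
      single_hi (by simp only [rank_pair, fv1]; omega) hw
    have h2 : Finsupp.single ((c,0) : Fin N × Fin 3) 1 w = 0 :=
      single_hi (by simp only [rank_pair, fv0, fv1]; omega) hw
    have h3 : Finsupp.single ((b,1) : Fin N × Fin 3) 1 w = 0 := single_hi le_rfl hw
    rw [Finsupp.add_apply, Finsupp.add_apply, h1, h2, Ymon_cons, Finsupp.add_apply, h3,
      hhigh w hw]
    omega

/-- Comparison at position (d,1). -/
lemma lt_m2_of_d (a c b d : Fin N) (r' : List (Fin N))
    (m : (Fin N × Fin 3) →₀ ℕ) (hac : a < c) (hcb : c < b) (hbd : b < d) (hdr' : d ∉ r')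
    (hd : m ((d, 1) : Fin N × Fin 3) = 0)
    (hhigh : ∀ w, rankVar ((d,1) : Fin N × Fin 3) < rankVar w → m w = Ymon r' w) :
    monLT m (Finsupp.single ((a,1) : Fin N × Fin 3) 1 + Finsupp.single ((c,0) : Fin N × Fin 3) 1
      + Ymon (b :: d :: r')) := by
  have hab : (a:ℕ) < (b:ℕ) := hac.trans hcb
  have hcb' : (c:ℕ) < (b:ℕ) := hcb
  have hbd' : (b:ℕ) < (d:ℕ) := hbd
  refine ⟨(d,1), ?_, ?_⟩
  · rw [hd]
    have h1 : Finsupp.single ((a,1) : Fin N × Fin 3) 1 ((d,1) : Fin N × Fin 3) = 0 :=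
      Finsupp.single_eq_of_ne (by simp [Prod.ext_iff]; omega)
    have h2 : Finsupp.single ((c,0) : Fin N × Fin 3) 1 ((d,1) : Fin N × Fin 3) = 0 :=
      Finsupp.single_eq_of_ne (by simp [Prod.ext_iff])
    have h3 : Finsupp.single ((b,1) : Fin N × Fin 3) 1 ((d,1) : Fin N × Fin 3) = 0 :=
      Finsupp.single_eq_of_ne (by simp [Prod.ext_iff]; omega)
    rw [Finsupp.add_apply, Finsupp.add_apply, h1, h2, Ymon_cons, Ymon_cons, Finsupp.add_apply,
      Finsupp.add_apply, h3, Finsupp.single_eq_same]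
    omega
  · intro w hw
    have h1 : Finsupp.single ((a,1) : Fin N × Fin 3) 1 w = 0 :=
      single_hi (by simp only [rank_pair, fv1]; omega) hw
    have h2 : Finsupp.single ((c,0) : Fin N × Fin 3) 1 w = 0 :=
      single_hi (by simp only [rank_pair, fv0, fv1]; omega) hw
    have h3 : Finsupp.single ((b,1) : Fin N × Fin 3) 1 w = 0 :=
      single_hi (by simp only [rank_pair, fv1]; omega) hw
    have h4 : Finsupp.single ((d,1) : Fin N × Fin 3) 1 w = 0 := single_hi le_rfl hw
    rw [Finsupp.add_apply, Finsupp.add_apply, h1, h2, Ymon_cons, Ymon_cons, Finsupp.add_apply,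
      Finsupp.add_apply, h3, h4, hhigh w hw]
    omega

/-- second Gpair monomial is below the first. -/
lemma gpair_lt2 (i j : Fin N) (hij : i < j) :
    monLT (Finsupp.single ((i,1) : Fin N × Fin 3) 1 + Finsupp.single ((j,1) : Fin N × Fin 3) 1)
      (Finsupp.single ((i,0) : Fin N × Fin 3) 1 + Finsupp.single ((j,2) : Fin N × Fin 3) 1) := by
  have hij' : (i:ℕ) < (j:ℕ) := hij
  refine ⟨(j,2), ?_, ?_⟩
  · have h1 : Finsupp.single ((i,1) : Fin N × Fin 3) 1 ((j,2) : Fin N × Fin 3) = 0 :=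
      Finsupp.single_eq_of_ne (by simp [Prod.ext_iff])
    have h2 : Finsupp.single ((j,1) : Fin N × Fin 3) 1 ((j,2) : Fin N × Fin 3) = 0 :=
      Finsupp.single_eq_of_ne (by simp [Prod.ext_iff])
    have h3 : Finsupp.single ((i,0) : Fin N × Fin 3) 1 ((j,2) : Fin N × Fin 3) = 0 :=
      Finsupp.single_eq_of_ne (by simp [Prod.ext_iff])
    rw [Finsupp.add_apply, Finsupp.add_apply, h1, h2, h3, Finsupp.single_eq_same]
    omega
  · intro w hw
    have h1 : Finsupp.single ((i,1) : Fin N × Fin 3) 1 w = 0 :=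
      single_hi (by simp only [rank_pair, fv1, fv2]; omega) hw
    have h2 : Finsupp.single ((j,1) : Fin N × Fin 3) 1 w = 0 :=
      single_hi (by simp only [rank_pair, fv1, fv2]; omega) hw
    have h3 : Finsupp.single ((i,0) : Fin N × Fin 3) 1 w = 0 :=
      single_hi (by simp only [rank_pair, fv0, fv2]; omega) hw
    have h4 : Finsupp.single ((j,2) : Fin N × Fin 3) 1 w = 0 := single_hi le_rfl hw
    rw [Finsupp.add_apply, Finsupp.add_apply, h1, h2, h3, h4]

/-- third Gpair monomial is below the first. -/
lemma gpair_lt3 (i j : Fin N) (hij : i < j) :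
    monLT (Finsupp.single ((i,2) : Fin N × Fin 3) 1 + Finsupp.single ((j,0) : Fin N × Fin 3) 1)
      (Finsupp.single ((i,0) : Fin N × Fin 3) 1 + Finsupp.single ((j,2) : Fin N × Fin 3) 1) := by
  have hij' : (i:ℕ) < (j:ℕ) := hij
  refine ⟨(j,2), ?_, ?_⟩
  · have h1 : Finsupp.single ((i,2) : Fin N × Fin 3) 1 ((j,2) : Fin N × Fin 3) = 0 :=
      Finsupp.single_eq_of_ne (by simp [Prod.ext_iff]; omega)
    have h2 : Finsupp.single ((j,0) : Fin N × Fin 3) 1 ((j,2) : Fin N × Fin 3) = 0 :=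
      Finsupp.single_eq_of_ne (by simp [Prod.ext_iff])
    have h3 : Finsupp.single ((i,0) : Fin N × Fin 3) 1 ((j,2) : Fin N × Fin 3) = 0 :=
      Finsupp.single_eq_of_ne (by simp [Prod.ext_iff])
    rw [Finsupp.add_apply, Finsupp.add_apply, h1, h2, h3, Finsupp.single_eq_same]
    omega
  · intro w hw
    have h1 : Finsupp.single ((i,2) : Fin N × Fin 3) 1 w = 0 :=
      single_hi (by simp only [rank_pair, fv2]; omega) hw
    have h2 : Finsupp.single ((j,0) : Fin N × Fin 3) 1 w = 0 :=
      single_hi (by simp only [rank_pair, fv0, fv2]; omega) hw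
    have h3 : Finsupp.single ((i,0) : Fin N × Fin 3) 1 w = 0 :=
      single_hi (by simp only [rank_pair, fv0, fv2]; omega) hw
    have h4 : Finsupp.single ((j,2) : Fin N × Fin 3) 1 w = 0 := single_hi le_rfl hw
    rw [Finsupp.add_apply, Finsupp.add_apply, h1, h2, h3, h4]

lemma m2_lt_m1 (a c : Fin N) (rest : List (Fin N)) (hac : a < c) (hcrest : c ∉ rest) :
    monLT (Finsupp.single ((a,1) : Fin N × Fin 3) 1 + Finsupp.single ((c,0) : Fin N × Fin 3) 1
            + Ymon rest)
          (Finsupp.single ((a,0) : Fin N × Fin 3) 1 + Finsupp.single ((c,1) : Fin N × Fin 3) 1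
            + Ymon rest) := by
  have hac' : (a:ℕ) < (c:ℕ) := hac
  refine ⟨(c,1), ?_, ?_⟩
  · have h1 : Finsupp.single ((a,1) : Fin N × Fin 3) 1 ((c,1) : Fin N × Fin 3) = 0 :=
      Finsupp.single_eq_of_ne (by simp [Prod.ext_iff]; omega)
    have h2 : Finsupp.single ((c,0) : Fin N × Fin 3) 1 ((c,1) : Fin N × Fin 3) = 0 :=
      Finsupp.single_eq_of_ne (by simp [Prod.ext_iff])
    have h3 : Finsupp.single ((a,0) : Fin N × Fin 3) 1 ((c,1) : Fin N × Fin 3) = 0 :=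
      Finsupp.single_eq_of_ne (by simp [Prod.ext_iff])
    have hY : Ymon rest ((c,1) : Fin N × Fin 3) = 0 := Ymon_apply_not_mem _ _ hcrest
    rw [Finsupp.add_apply, Finsupp.add_apply, Finsupp.add_apply, Finsupp.add_apply, h1, h2, h3,
      Finsupp.single_eq_same, hY]
    omega
  · intro w hw
    have h1 : Finsupp.single ((a,1) : Fin N × Fin 3) 1 w = 0 :=
      single_hi (by simp only [rank_pair, fv1]; omega) hw
    have h2 : Finsupp.single ((c,0) : Fin N × Fin 3) 1 w = 0 :=
      single_hi (by simp only [rank_pair, fv0, fv1]; omega) hw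
    have h3 : Finsupp.single ((a,0) : Fin N × Fin 3) 1 w = 0 :=
      single_hi (by simp only [rank_pair, fv0, fv1]; omega) hw
    have h4 : Finsupp.single ((c,1) : Fin N × Fin 3) 1 w = 0 := single_hi le_rfl hw
    rw [Finsupp.add_apply, Finsupp.add_apply, Finsupp.add_apply, Finsupp.add_apply, h1, h2, h3, h4]

end Compare
section Poly
variable {K : Type} [Field K] {N : ℕ}

lemma Xm (v : Fin N × Fin 3) :
    (X v : MvPolynomial (Fin N × Fin 3) K) = monomial (Finsupp.single v 1) 1 := rfl

/-- product of the Y's over a list -/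
noncomputable def Yp (K : Type) [Field K] (N : ℕ) (l : List (Fin N)) :
    MvPolynomial (Fin N × Fin 3) K := (l.map (YY K N)).prod

lemma Yp_nil : Yp K N [] = 1 := rfl

lemma Yp_cons (i : Fin N) (l : List (Fin N)) : Yp K N (i::l) = YY K N i * Yp K N l := by
  simp [Yp]

lemma Yp_eq (l : List (Fin N)) : Yp K N l = monomial (Ymon l) (1:K) := by
  induction l with
  | nil => simp [Yp_nil, Ymon_nil]
  | cons i l ih => rw [Yp_cons, ih, Ymon_cons, YY, Xm, monomial_mul, one_mul]

lemma pair_Yp (v1 v2 : Fin N × Fin 3) (l : List (Fin N)) :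
    (X v1 * X v2 * Yp K N l : MvPolynomial (Fin N × Fin 3) K) =
      monomial (Finsupp.single v1 1 + Finsupp.single v2 1 + Ymon l) 1 := by
  rw [Xm, Xm, Yp_eq, monomial_mul, monomial_mul, one_mul, one_mul]

lemma triple_eq (v1 v2 v3 : Fin N × Fin 3) :
    (X v1 * X v2 * X v3 : MvPolynomial (Fin N × Fin 3) K) =
      monomial (Finsupp.single v1 1 + Finsupp.single v2 1 + Finsupp.single v3 1) 1 := by
  rw [Xm, Xm, Xm, monomial_mul, monomial_mul, one_mul, one_mul]

lemma quad_eq (v1 v2 v3 v4 : Fin N × Fin 3) (l : List (Fin N)) :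
    (X v1 * X v2 * Yp K N l * (X v3 * X v4) : MvPolynomial (Fin N × Fin 3) K) =
      monomial (Finsupp.single v1 1 + Finsupp.single v2 1 + Ymon l
        + (Finsupp.single v3 1 + Finsupp.single v4 1)) 1 := by
  rw [pair_Yp, Xm, Xm, monomial_mul, monomial_mul, one_mul, one_mul]

lemma Gpair_eq (i j : Fin N) : Gpair K N i j =
      monomial (Finsupp.single ((i,0) : Fin N × Fin 3) 1 + Finsupp.single ((j,2) : Fin N × Fin 3) 1) 1
    - monomial (Finsupp.single ((i,1) : Fin N × Fin 3) 1 + Finsupp.single ((j,1) : Fin N × Fin 3) 1) 1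
    + monomial (Finsupp.single ((i,2) : Fin N × Fin 3) 1 + Finsupp.single ((j,0) : Fin N × Fin 3) 1) 1 := by
  simp only [Gpair, XX, YY, ZZ, Xm, monomial_mul, one_mul]

lemma Gpair_support (i j : Fin N) : (Gpair K N i j).support ⊆
    {Finsupp.single ((i,0) : Fin N × Fin 3) 1 + Finsupp.single ((j,2) : Fin N × Fin 3) 1,
     Finsupp.single ((i,1) : Fin N × Fin 3) 1 + Finsupp.single ((j,1) : Fin N × Fin 3) 1,
     Finsupp.single ((i,2) : Fin N × Fin 3) 1 + Finsupp.single ((j,0) : Fin N × Fin 3) 1} := by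
  intro m hm
  rw [MvPolynomial.mem_support_iff] at hm
  by_contra h
  simp only [Finset.mem_insert, Finset.mem_singleton, not_or] at h
  obtain ⟨h1, h2, h3⟩ := h
  apply hm
  rw [Gpair_eq]
  simp [MvPolynomial.coeff_add, MvPolynomial.coeff_sub, MvPolynomial.coeff_monomial,
    Ne.symm h1, Ne.symm h2, Ne.symm h3]

end Poly

section Main
variable {K : Type} [Field K] {N : ℕ}

lemma FF_base2 (a c : Fin N) :
    ∃ q : MvPolynomial (Fin N × Fin 3) K,
      FF K N [a, c] = XX K N a * YY K N c * Yp K N [] - YY K N a * XX K N c * Yp K N [] + q ∧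
      ∀ m ∈ q.support, monLT m (Finsupp.single ((a,1) : Fin N × Fin 3) (1:ℕ) + Finsupp.single ((c,0) : Fin N × Fin 3) (1:ℕ) + Ymon ([] : List (Fin N))) := by
  refine ⟨0, ?_, by simp⟩
  simp only [FF, Yp_nil]
  ring

lemma FF_base3 (a c b : Fin N) (hac : a < c) (hcb : c < b) :
    ∃ q : MvPolynomial (Fin N × Fin 3) K,
      FF K N [a, c, b] = XX K N a * YY K N c * Yp K N [b] - YY K N a * XX K N c * Yp K N [b] + q ∧
      ∀ m ∈ q.support, monLT m (Finsupp.single ((a,1) : Fin N × Fin 3) (1:ℕ) + Finsupp.single ((c,0) : Fin N × Fin 3) (1:ℕ) + Ymon [b]) := by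
  have hab : a < b := hac.trans hcb
  have hac' : (a:ℕ) < (c:ℕ) := hac
  have hcb' : (c:ℕ) < (b:ℕ) := hcb
  have hab' : (a:ℕ) < (b:ℕ) := hab
  refine ⟨monomial (Finsupp.single ((c,0) : Fin N × Fin 3) (1:ℕ) + Finsupp.single ((a,2) : Fin N × Fin 3) (1:ℕ) + Finsupp.single ((b,0) : Fin N × Fin 3) (1:ℕ)) (1:K)
        - monomial (Finsupp.single ((a,0) : Fin N × Fin 3) (1:ℕ) + Finsupp.single ((c,2) : Fin N × Fin 3) (1:ℕ) + Finsupp.single ((b,0) : Fin N × Fin 3) (1:ℕ)) (1:K), ?_, ?_⟩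
  · simp only [FF]
    rw [← triple_eq, ← triple_eq]
    simp only [Gpair, XX, YY, ZZ, Yp_cons, Yp_nil]
    ring
  · have hB1 : monLT (Finsupp.single ((c,0) : Fin N × Fin 3) (1:ℕ) + Finsupp.single ((a,2) : Fin N × Fin 3) (1:ℕ) + Finsupp.single ((b,0) : Fin N × Fin 3) (1:ℕ))
        (Finsupp.single ((a,1) : Fin N × Fin 3) (1:ℕ) + Finsupp.single ((c,0) : Fin N × Fin 3) (1:ℕ) + Ymon [b]) := by
      refine lt_m2_of a c b [] _ hac hcb ?_ ?_
      · simp [Finsupp.add_apply, Finsupp.single_apply, Prod.ext_iff]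
      · intro w hw
        have h1 : Finsupp.single ((c,0) : Fin N × Fin 3) (1:ℕ) w = 0 := single_hi (by simp only [rank_pair, fv0, fv1]; omega) hw
        have h2 : Finsupp.single ((a,2) : Fin N × Fin 3) (1:ℕ) w = 0 := single_hi (by simp only [rank_pair, fv1, fv2]; omega) hw
        have h3 : Finsupp.single ((b,0) : Fin N × Fin 3) (1:ℕ) w = 0 := single_hi (by simp only [rank_pair, fv0, fv1]; omega) hw
        rw [Finsupp.add_apply, Finsupp.add_apply, h1, h2, h3, Ymon_nil]
        simp
    have hB2 : monLT (Finsupp.single ((a,0) : Fin N × Fin 3) (1:ℕ) + Finsupp.single ((c,2) : Fin N × Fin 3) (1:ℕ) + Finsupp.single ((b,0) : Fin N × Fin 3) (1:ℕ))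
        (Finsupp.single ((a,1) : Fin N × Fin 3) (1:ℕ) + Finsupp.single ((c,0) : Fin N × Fin 3) (1:ℕ) + Ymon [b]) := by
      refine lt_m2_of a c b [] _ hac hcb ?_ ?_
      · simp [Finsupp.add_apply, Finsupp.single_apply, Prod.ext_iff]
      · intro w hw
        have h1 : Finsupp.single ((a,0) : Fin N × Fin 3) (1:ℕ) w = 0 := single_hi (by simp only [rank_pair, fv0, fv1]; omega) hw
        have h2 : Finsupp.single ((c,2) : Fin N × Fin 3) (1:ℕ) w = 0 := single_hi (by simp only [rank_pair, fv1, fv2]; omega) hw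
        have h3 : Finsupp.single ((b,0) : Fin N × Fin 3) (1:ℕ) w = 0 := single_hi (by simp only [rank_pair, fv0, fv1]; omega) hw
        rw [Finsupp.add_apply, Finsupp.add_apply, h1, h2, h3, Ymon_nil]
        simp
    intro m hm
    rw [MvPolynomial.mem_support_iff] at hm
    by_cases h1 : m = Finsupp.single ((c,0) : Fin N × Fin 3) (1:ℕ) + Finsupp.single ((a,2) : Fin N × Fin 3) (1:ℕ) + Finsupp.single ((b,0) : Fin N × Fin 3) (1:ℕ)
    · subst h1; exact hB1
    by_cases h2 : m = Finsupp.single ((a,0) : Fin N × Fin 3) (1:ℕ) + Finsupp.single ((c,2) : Fin N × Fin 3) (1:ℕ) + Finsupp.single ((b,0) : Fin N × Fin 3) (1:ℕ)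
    · subst h2; exact hB2
    exfalso
    apply hm
    rw [MvPolynomial.coeff_sub, MvPolynomial.coeff_monomial, MvPolynomial.coeff_monomial,
      if_neg (fun h => h1 h.symm), if_neg (fun h => h2 h.symm), sub_zero]

end Main

section Main2
variable {K : Type} [Field K] {N : ℕ}

lemma FF_main (n : ℕ) :
    ∀ rest : List (Fin N), rest.length ≤ n → ∀ a c : Fin N,
      (a :: c :: rest).Chain' (· < ·) →
      ∃ q : MvPolynomial (Fin N × Fin 3) K,
        FF K N (a :: c :: rest)
          = XX K N a * YY K N c * Yp K N rest - YY K N a * XX K N c * Yp K N rest + q ∧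
        ∀ m ∈ q.support, monLT m (Finsupp.single ((a,1) : Fin N × Fin 3) (1:ℕ) + Finsupp.single ((c,0) : Fin N × Fin 3) (1:ℕ) + Ymon rest) := by
  induction n with
  | zero =>
    intro rest hlen a c _
    obtain rfl : rest = [] := List.length_eq_zero_iff.mp (Nat.le_zero.mp hlen)
    exact FF_base2 a c
  | succ n ih =>
    intro rest hlen a c hch
    match rest with
    | [] => exact FF_base2 a c
    | [b] =>
      rw [List.Chain', List.isChain_cons_cons] at hch
      obtain ⟨hac, hch⟩ := hch
      rw [List.isChain_cons_cons] at hch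
      exact FF_base3 a c b hac hch.1
    | b :: d :: r' =>
      rw [List.Chain', List.isChain_cons_cons] at hch
      obtain ⟨hac, hch⟩ := hch
      rw [List.isChain_cons_cons] at hch
      obtain ⟨hcb, hch⟩ := hch
      rw [List.isChain_cons_cons] at hch
      obtain ⟨hbd, hch⟩ := hch
      have hpw : (d :: r').Pairwise (· < ·) := List.isChain_iff_pairwise.mp hch
      have hdlt : ∀ x ∈ r', d < x := (List.pairwise_cons.mp hpw).1
      have hdr' : d ∉ r' := fun h => lt_irrefl d (hdlt d h)
      have hbr' : b ∉ r' := fun h => lt_irrefl b (hbd.trans (hdlt b h))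
      have hcd : c < d := hcb.trans hbd
      have had : a < d := hac.trans hcd
      have hab : a < b := hac.trans hcb
      have hac' : (a:ℕ) < (c:ℕ) := hac
      have hcb' : (c:ℕ) < (b:ℕ) := hcb
      have hbd' : (b:ℕ) < (d:ℕ) := hbd
      have hchc : (c :: d :: r').Chain' (· < ·) := List.isChain_cons_cons.mpr ⟨hcd, hch⟩
      have hcha : (a :: d :: r').Chain' (· < ·) := List.isChain_cons_cons.mpr ⟨had, hch⟩
      have hlen' : r'.length ≤ n := by simp at hlen; omega
      obtain ⟨qc, hqc, hqcs⟩ := ih r' hlen' c d hchc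
      obtain ⟨qa, hqa, hqas⟩ := ih r' hlen' a d hcha
      refine ⟨monomial (Finsupp.single ((c,0) : Fin N × Fin 3) (1:ℕ) + Finsupp.single ((d,1) : Fin N × Fin 3) (1:ℕ) + Ymon r' + (Finsupp.single ((a,2) : Fin N × Fin 3) (1:ℕ) + Finsupp.single ((b,0) : Fin N × Fin 3) (1:ℕ))) (1:K) - monomial (Finsupp.single ((c,1) : Fin N × Fin 3) (1:ℕ) + Finsupp.single ((d,0) : Fin N × Fin 3) (1:ℕ) + Ymon r' + (Finsupp.single ((a,0) : Fin N × Fin 3) (1:ℕ) + Finsupp.single ((b,2) : Fin N × Fin 3) (1:ℕ))) (1:K) + monomial (Finsupp.single ((c,1) : Fin N × Fin 3) (1:ℕ) + Finsupp.single ((d,0) : Fin N × Fin 3) (1:ℕ) + Ymon r' + (Finsupp.single ((a,1) : Fin N × Fin 3) (1:ℕ) + Finsupp.single ((b,1) : Fin N × Fin 3) (1:ℕ))) (1:K)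
        - monomial (Finsupp.single ((c,1) : Fin N × Fin 3) (1:ℕ) + Finsupp.single ((d,0) : Fin N × Fin 3) (1:ℕ) + Ymon r' + (Finsupp.single ((a,2) : Fin N × Fin 3) (1:ℕ) + Finsupp.single ((b,0) : Fin N × Fin 3) (1:ℕ))) (1:K) - monomial (Finsupp.single ((a,0) : Fin N × Fin 3) (1:ℕ) + Finsupp.single ((d,1) : Fin N × Fin 3) (1:ℕ) + Ymon r' + (Finsupp.single ((c,2) : Fin N × Fin 3) (1:ℕ) + Finsupp.single ((b,0) : Fin N × Fin 3) (1:ℕ))) (1:K) + monomial (Finsupp.single ((a,1) : Fin N × Fin 3) (1:ℕ) + Finsupp.single ((d,0) : Fin N × Fin 3) (1:ℕ) + Ymon r' + (Finsupp.single ((c,0) : Fin N × Fin 3) (1:ℕ) + Finsupp.single ((b,2) : Fin N × Fin 3) (1:ℕ))) (1:K)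
        - monomial (Finsupp.single ((a,1) : Fin N × Fin 3) (1:ℕ) + Finsupp.single ((d,0) : Fin N × Fin 3) (1:ℕ) + Ymon r' + (Finsupp.single ((c,1) : Fin N × Fin 3) (1:ℕ) + Finsupp.single ((b,1) : Fin N × Fin 3) (1:ℕ))) (1:K) + monomial (Finsupp.single ((a,1) : Fin N × Fin 3) (1:ℕ) + Finsupp.single ((d,0) : Fin N × Fin 3) (1:ℕ) + Ymon r' + (Finsupp.single ((c,2) : Fin N × Fin 3) (1:ℕ) + Finsupp.single ((b,0) : Fin N × Fin 3) (1:ℕ))) (1:K)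
        + qc * Gpair K N a b - qa * Gpair K N c b, ?eq, ?supp⟩
      case eq =>
        rw [FF, hqc, hqa]
        rw [← quad_eq, ← quad_eq, ← quad_eq, ← quad_eq, ← quad_eq, ← quad_eq, ← quad_eq,
          ← quad_eq]
        simp only [Gpair, XX, YY, ZZ, Yp_cons]
        ring
      case supp =>
        have hE1 : monLT (Finsupp.single ((c,0) : Fin N × Fin 3) (1:ℕ) + Finsupp.single ((d,1) : Fin N × Fin 3) (1:ℕ) + Ymon r' + (Finsupp.single ((a,2) : Fin N × Fin 3) (1:ℕ) + Finsupp.single ((b,0) : Fin N × Fin 3) (1:ℕ))) (Finsupp.single ((a,1) : Fin N × Fin 3) (1:ℕ) + Finsupp.single ((c,0) : Fin N × Fin 3) (1:ℕ) + Ymon (b :: d :: r')) := by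
          refine lt_m2_of a c b (d :: r') _ hac hcb ?_ ?_
          · have hY : Ymon r' ((b,1) : Fin N × Fin 3) = 0 := Ymon_apply_not_mem _ _ hbr'
            simp [Finsupp.add_apply, Finsupp.single_apply, Prod.ext_iff, hY, hbd.ne, hbd.ne']
          · intro w hw
            have h1 : Finsupp.single ((c,0) : Fin N × Fin 3) (1:ℕ) w = 0 := single_hi (by simp only [rank_pair, fv0, fv1]; omega) hw
            have h2 : Finsupp.single ((a,2) : Fin N × Fin 3) (1:ℕ) w = 0 := single_hi (by simp only [rank_pair, fv1, fv2]; omega) hw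
            have h3 : Finsupp.single ((b,0) : Fin N × Fin 3) (1:ℕ) w = 0 := single_hi (by simp only [rank_pair, fv0, fv1]; omega) hw
            simp only [Ymon_cons, Finsupp.add_apply]
            rw [h1, h2, h3]
            omega
        have hE2 : monLT (Finsupp.single ((c,1) : Fin N × Fin 3) (1:ℕ) + Finsupp.single ((d,0) : Fin N × Fin 3) (1:ℕ) + Ymon r' + (Finsupp.single ((a,0) : Fin N × Fin 3) (1:ℕ) + Finsupp.single ((b,2) : Fin N × Fin 3) (1:ℕ))) (Finsupp.single ((a,1) : Fin N × Fin 3) (1:ℕ) + Finsupp.single ((c,0) : Fin N × Fin 3) (1:ℕ) + Ymon (b :: d :: r')) := by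
          refine lt_m2_of_d a c b d r' _ hac hcb hbd hdr' ?_ ?_
          · have hY : Ymon r' ((d,1) : Fin N × Fin 3) = 0 := Ymon_apply_not_mem _ _ hdr'
            simp [Finsupp.add_apply, Finsupp.single_apply, Prod.ext_iff, hY, hcd.ne, had.ne, hbd.ne, hcd.ne', had.ne']
          · intro w hw
            have h1 : Finsupp.single ((c,1) : Fin N × Fin 3) (1:ℕ) w = 0 := single_hi (by simp only [rank_pair, fv1]; omega) hw
            have h2 : Finsupp.single ((d,0) : Fin N × Fin 3) (1:ℕ) w = 0 := single_hi (by simp only [rank_pair, fv0, fv1]; omega) hw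
            have h3 : Finsupp.single ((a,0) : Fin N × Fin 3) (1:ℕ) w = 0 := single_hi (by simp only [rank_pair, fv0, fv1, fv2]; omega) hw
            have h4 : Finsupp.single ((b,2) : Fin N × Fin 3) (1:ℕ) w = 0 := single_hi (by simp only [rank_pair, fv0, fv1, fv2]; omega) hw
            simp only [Ymon_cons, Finsupp.add_apply]
            rw [h1, h2, h3, h4]
            omega
        have hE5 : monLT (Finsupp.single ((a,0) : Fin N × Fin 3) (1:ℕ) + Finsupp.single ((d,1) : Fin N × Fin 3) (1:ℕ) + Ymon r' + (Finsupp.single ((c,2) : Fin N × Fin 3) (1:ℕ) + Finsupp.single ((b,0) : Fin N × Fin 3) (1:ℕ))) (Finsupp.single ((a,1) : Fin N × Fin 3) (1:ℕ) + Finsupp.single ((c,0) : Fin N × Fin 3) (1:ℕ) + Ymon (b :: d :: r')) := by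
          refine lt_m2_of a c b (d :: r') _ hac hcb ?_ ?_
          · have hY : Ymon r' ((b,1) : Fin N × Fin 3) = 0 := Ymon_apply_not_mem _ _ hbr'
            simp [Finsupp.add_apply, Finsupp.single_apply, Prod.ext_iff, hY, hbd.ne, hbd.ne']
          · intro w hw
            have h1 : Finsupp.single ((a,0) : Fin N × Fin 3) (1:ℕ) w = 0 := single_hi (by simp only [rank_pair, fv0, fv1]; omega) hw
            have h2 : Finsupp.single ((c,2) : Fin N × Fin 3) (1:ℕ) w = 0 := single_hi (by simp only [rank_pair, fv1, fv2]; omega) hw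
            have h3 : Finsupp.single ((b,0) : Fin N × Fin 3) (1:ℕ) w = 0 := single_hi (by simp only [rank_pair, fv0, fv1]; omega) hw
            simp only [Ymon_cons, Finsupp.add_apply]
            rw [h1, h2, h3]
            omega
        have hE6 : monLT (Finsupp.single ((a,1) : Fin N × Fin 3) (1:ℕ) + Finsupp.single ((d,0) : Fin N × Fin 3) (1:ℕ) + Ymon r' + (Finsupp.single ((c,0) : Fin N × Fin 3) (1:ℕ) + Finsupp.single ((b,2) : Fin N × Fin 3) (1:ℕ))) (Finsupp.single ((a,1) : Fin N × Fin 3) (1:ℕ) + Finsupp.single ((c,0) : Fin N × Fin 3) (1:ℕ) + Ymon (b :: d :: r')) := by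
          refine lt_m2_of_d a c b d r' _ hac hcb hbd hdr' ?_ ?_
          · have hY : Ymon r' ((d,1) : Fin N × Fin 3) = 0 := Ymon_apply_not_mem _ _ hdr'
            simp [Finsupp.add_apply, Finsupp.single_apply, Prod.ext_iff, hY, hcd.ne, had.ne, hbd.ne, hcd.ne', had.ne']
          · intro w hw
            have h1 : Finsupp.single ((a,1) : Fin N × Fin 3) (1:ℕ) w = 0 := single_hi (by simp only [rank_pair, fv1]; omega) hw
            have h2 : Finsupp.single ((d,0) : Fin N × Fin 3) (1:ℕ) w = 0 := single_hi (by simp only [rank_pair, fv0, fv1]; omega) hw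
            have h3 : Finsupp.single ((c,0) : Fin N × Fin 3) (1:ℕ) w = 0 := single_hi (by simp only [rank_pair, fv0, fv1, fv2]; omega) hw
            have h4 : Finsupp.single ((b,2) : Fin N × Fin 3) (1:ℕ) w = 0 := single_hi (by simp only [rank_pair, fv0, fv1, fv2]; omega) hw
            simp only [Ymon_cons, Finsupp.add_apply]
            rw [h1, h2, h3, h4]
            omega
        have hE3 : monLT (Finsupp.single ((c,1) : Fin N × Fin 3) (1:ℕ) + Finsupp.single ((d,0) : Fin N × Fin 3) (1:ℕ) + Ymon r' + (Finsupp.single ((a,1) : Fin N × Fin 3) (1:ℕ) + Finsupp.single ((b,1) : Fin N × Fin 3) (1:ℕ))) (Finsupp.single ((a,1) : Fin N × Fin 3) (1:ℕ) + Finsupp.single ((c,0) : Fin N × Fin 3) (1:ℕ) + Ymon (b :: d :: r')) :=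
          monLT_trans (monLT_add_left (gpair_lt2 a b hab) _) hE2
        have hE4 : monLT (Finsupp.single ((c,1) : Fin N × Fin 3) (1:ℕ) + Finsupp.single ((d,0) : Fin N × Fin 3) (1:ℕ) + Ymon r' + (Finsupp.single ((a,2) : Fin N × Fin 3) (1:ℕ) + Finsupp.single ((b,0) : Fin N × Fin 3) (1:ℕ))) (Finsupp.single ((a,1) : Fin N × Fin 3) (1:ℕ) + Finsupp.single ((c,0) : Fin N × Fin 3) (1:ℕ) + Ymon (b :: d :: r')) :=
          monLT_trans (monLT_add_left (gpair_lt3 a b hab) _) hE2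
        have hE7 : monLT (Finsupp.single ((a,1) : Fin N × Fin 3) (1:ℕ) + Finsupp.single ((d,0) : Fin N × Fin 3) (1:ℕ) + Ymon r' + (Finsupp.single ((c,1) : Fin N × Fin 3) (1:ℕ) + Finsupp.single ((b,1) : Fin N × Fin 3) (1:ℕ))) (Finsupp.single ((a,1) : Fin N × Fin 3) (1:ℕ) + Finsupp.single ((c,0) : Fin N × Fin 3) (1:ℕ) + Ymon (b :: d :: r')) :=
          monLT_trans (monLT_add_left (gpair_lt2 c b hcb) _) hE6
        have hE8 : monLT (Finsupp.single ((a,1) : Fin N × Fin 3) (1:ℕ) + Finsupp.single ((d,0) : Fin N × Fin 3) (1:ℕ) + Ymon r' + (Finsupp.single ((c,2) : Fin N × Fin 3) (1:ℕ) + Finsupp.single ((b,0) : Fin N × Fin 3) (1:ℕ))) (Finsupp.single ((a,1) : Fin N × Fin 3) (1:ℕ) + Finsupp.single ((c,0) : Fin N × Fin 3) (1:ℕ) + Ymon (b :: d :: r')) :=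
          monLT_trans (monLT_add_left (gpair_lt3 c b hcb) _) hE6
        intro m hm
        rw [MvPolynomial.mem_support_iff] at hm
        by_cases hc1 : m = Finsupp.single ((c,0) : Fin N × Fin 3) (1:ℕ) + Finsupp.single ((d,1) : Fin N × Fin 3) (1:ℕ) + Ymon r' + (Finsupp.single ((a,2) : Fin N × Fin 3) (1:ℕ) + Finsupp.single ((b,0) : Fin N × Fin 3) (1:ℕ))
        · subst hc1; exact hE1
        by_cases hc2 : m = Finsupp.single ((c,1) : Fin N × Fin 3) (1:ℕ) + Finsupp.single ((d,0) : Fin N × Fin 3) (1:ℕ) + Ymon r' + (Finsupp.single ((a,0) : Fin N × Fin 3) (1:ℕ) + Finsupp.single ((b,2) : Fin N × Fin 3) (1:ℕ))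
        · subst hc2; exact hE2
        by_cases hc3 : m = Finsupp.single ((c,1) : Fin N × Fin 3) (1:ℕ) + Finsupp.single ((d,0) : Fin N × Fin 3) (1:ℕ) + Ymon r' + (Finsupp.single ((a,1) : Fin N × Fin 3) (1:ℕ) + Finsupp.single ((b,1) : Fin N × Fin 3) (1:ℕ))
        · subst hc3; exact hE3
        by_cases hc4 : m = Finsupp.single ((c,1) : Fin N × Fin 3) (1:ℕ) + Finsupp.single ((d,0) : Fin N × Fin 3) (1:ℕ) + Ymon r' + (Finsupp.single ((a,2) : Fin N × Fin 3) (1:ℕ) + Finsupp.single ((b,0) : Fin N × Fin 3) (1:ℕ))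
        · subst hc4; exact hE4
        by_cases hc5 : m = Finsupp.single ((a,0) : Fin N × Fin 3) (1:ℕ) + Finsupp.single ((d,1) : Fin N × Fin 3) (1:ℕ) + Ymon r' + (Finsupp.single ((c,2) : Fin N × Fin 3) (1:ℕ) + Finsupp.single ((b,0) : Fin N × Fin 3) (1:ℕ))
        · subst hc5; exact hE5
        by_cases hc6 : m = Finsupp.single ((a,1) : Fin N × Fin 3) (1:ℕ) + Finsupp.single ((d,0) : Fin N × Fin 3) (1:ℕ) + Ymon r' + (Finsupp.single ((c,0) : Fin N × Fin 3) (1:ℕ) + Finsupp.single ((b,2) : Fin N × Fin 3) (1:ℕ))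
        · subst hc6; exact hE6
        by_cases hc7 : m = Finsupp.single ((a,1) : Fin N × Fin 3) (1:ℕ) + Finsupp.single ((d,0) : Fin N × Fin 3) (1:ℕ) + Ymon r' + (Finsupp.single ((c,1) : Fin N × Fin 3) (1:ℕ) + Finsupp.single ((b,1) : Fin N × Fin 3) (1:ℕ))
        · subst hc7; exact hE7
        by_cases hc8 : m = Finsupp.single ((a,1) : Fin N × Fin 3) (1:ℕ) + Finsupp.single ((d,0) : Fin N × Fin 3) (1:ℕ) + Ymon r' + (Finsupp.single ((c,2) : Fin N × Fin 3) (1:ℕ) + Finsupp.single ((b,0) : Fin N × Fin 3) (1:ℕ))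
        · subst hc8; exact hE8
        simp only [MvPolynomial.coeff_sub, MvPolynomial.coeff_add,
          MvPolynomial.coeff_monomial] at hm
        rw [if_neg (fun h => hc1 h.symm), if_neg (fun h => hc2 h.symm),
          if_neg (fun h => hc3 h.symm), if_neg (fun h => hc4 h.symm),
          if_neg (fun h => hc5 h.symm), if_neg (fun h => hc6 h.symm),
          if_neg (fun h => hc7 h.symm), if_neg (fun h => hc8 h.symm)] at hm
        simp only [sub_zero, add_zero, zero_add, zero_sub, neg_zero, sub_self] at hm
        have hcases : MvPolynomial.coeff m (qc * Gpair K N a b) ≠ 0 ∨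
            MvPolynomial.coeff m (qa * Gpair K N c b) ≠ 0 := by
          by_contra hno
          push_neg at hno
          rw [hno.1, hno.2, sub_zero] at hm
          exact hm rfl
        rcases hcases with hcase | hcase
        · have hmem : m ∈ (qc * Gpair K N a b).support := MvPolynomial.mem_support_iff.mpr hcase
          have hmem2 := MvPolynomial.support_mul _ _ hmem
          rw [Finset.mem_add] at hmem2
          obtain ⟨x, hx, y, hy, rfl⟩ := hmem2
          have hxlt := hqcs x hx
          have hy' := Gpair_support a b hy
          simp only [Finset.mem_insert, Finset.mem_singleton] at hy'
          rcases hy' with rfl | rfl | rfl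
          · exact monLT_trans (monLT_add_right hxlt _) hE2
          · exact monLT_trans (monLT_add_right hxlt _)
              (monLT_trans (monLT_add_left (gpair_lt2 a b hab) _) hE2)
          · exact monLT_trans (monLT_add_right hxlt _)
              (monLT_trans (monLT_add_left (gpair_lt3 a b hab) _) hE2)
        · have hmem : m ∈ (qa * Gpair K N c b).support := MvPolynomial.mem_support_iff.mpr hcase
          have hmem2 := MvPolynomial.support_mul _ _ hmem
          rw [Finset.mem_add] at hmem2
          obtain ⟨x, hx, y, hy, rfl⟩ := hmem2
          have hxlt := hqas x hx
          have hy' := Gpair_support c b hy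
          simp only [Finset.mem_insert, Finset.mem_singleton] at hy'
          rcases hy' with rfl | rfl | rfl
          · exact monLT_trans (monLT_add_right hxlt _) hE6
          · exact monLT_trans (monLT_add_right hxlt _)
              (monLT_trans (monLT_add_left (gpair_lt2 c b hcb) _) hE6)
          · exact monLT_trans (monLT_add_right hxlt _)
              (monLT_trans (monLT_add_left (gpair_lt3 c b hcb) _) hE6)

end Main2
/-- with the lex order Z_N > Y_N > X_N > ⋯ > Z₁ > Y₁ > X₁, for
i₁ < i₂ < ⋯ < i_t (t ≥ 2, here l = a :: c :: rest),
F_l = X_{i₁} Y_{i₂} ⋯ Y_{i_t} - Y_{i₁} X_{i₂} Y_{i₃} ⋯ Y_{i_t} + lower order terms;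
in particular the leading monomial of F_l is X_{i₁} Y_{i₂} ⋯ Y_{i_t}. -/
theorem FF_leading_terms (K : Type) [Field K] [CharZero K] (N : ℕ)
    (a c : Fin N) (rest : List (Fin N))
    (hchain : (a :: c :: rest).Chain' (· < ·)) :
    MvPolynomial.coeff
        (Finsupp.single ((a, 0) : Fin N × Fin 3) 1 + Finsupp.single ((c, 1) : Fin N × Fin 3) 1
          + Ymon rest) (FF K N (a :: c :: rest)) = 1 ∧
    MvPolynomial.coeff
        (Finsupp.single ((a, 1) : Fin N × Fin 3) 1 + Finsupp.single ((c, 0) : Fin N × Fin 3) 1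
          + Ymon rest) (FF K N (a :: c :: rest)) = -1 ∧
    monLT (Finsupp.single ((a, 1) : Fin N × Fin 3) 1 + Finsupp.single ((c, 0) : Fin N × Fin 3) 1
            + Ymon rest)
          (Finsupp.single ((a, 0) : Fin N × Fin 3) 1 + Finsupp.single ((c, 1) : Fin N × Fin 3) 1
            + Ymon rest) ∧
    ∀ m ∈ (FF K N (a :: c :: rest)).support,
      m ≠ Finsupp.single ((a, 0) : Fin N × Fin 3) 1 + Finsupp.single ((c, 1) : Fin N × Fin 3) 1
            + Ymon rest →
      m ≠ Finsupp.single ((a, 1) : Fin N × Fin 3) 1 + Finsupp.single ((c, 0) : Fin N × Fin 3) 1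
            + Ymon rest →
      monLT m (Finsupp.single ((a, 1) : Fin N × Fin 3) 1
                + Finsupp.single ((c, 0) : Fin N × Fin 3) 1 + Ymon rest) := by

  have hpw : (a :: c :: rest).Pairwise (· < ·) := List.isChain_iff_pairwise.mp hchain
  have hac : a < c := (List.pairwise_cons.mp hpw).1 c (List.mem_cons_self)
  have hcrest : c ∉ rest := by
    have h2 := (List.pairwise_cons.mp (List.pairwise_cons.mp hpw).2).1
    exact fun h => lt_irrefl c (h2 c h)
  obtain ⟨q, heq, hq⟩ := FF_main (K := K) rest.length rest le_rfl a c hchain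
  have hP1 : XX K N a * YY K N c * Yp K N rest
      = MvPolynomial.monomial (Finsupp.single ((a, 0) : Fin N × Fin 3) 1
          + Finsupp.single ((c, 1) : Fin N × Fin 3) 1 + Ymon rest) (1:K) := by
    rw [XX, YY]; exact pair_Yp _ _ _
  have hP2 : YY K N a * XX K N c * Yp K N rest
      = MvPolynomial.monomial (Finsupp.single ((a, 1) : Fin N × Fin 3) 1
          + Finsupp.single ((c, 0) : Fin N × Fin 3) 1 + Ymon rest) (1:K) := by
    rw [XX, YY]; exact pair_Yp _ _ _
  rw [hP1, hP2] at heq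
  have hm21 := m2_lt_m1 a c rest hac hcrest
  have hne : (Finsupp.single ((a, 1) : Fin N × Fin 3) 1 + Finsupp.single ((c, 0) : Fin N × Fin 3) 1
        + Ymon rest) ≠ (Finsupp.single ((a, 0) : Fin N × Fin 3) 1
        + Finsupp.single ((c, 1) : Fin N × Fin 3) 1 + Ymon rest) := monLT_ne hm21
  have hq1 : MvPolynomial.coeff (Finsupp.single ((a, 0) : Fin N × Fin 3) 1
      + Finsupp.single ((c, 1) : Fin N × Fin 3) 1 + Ymon rest) q = 0 := by
    by_contra h
    exact monLT_irrefl _ (monLT_trans (hq _ (MvPolynomial.mem_support_iff.mpr h)) hm21)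
  have hq2 : MvPolynomial.coeff (Finsupp.single ((a, 1) : Fin N × Fin 3) 1
      + Finsupp.single ((c, 0) : Fin N × Fin 3) 1 + Ymon rest) q = 0 := by
    by_contra h
    exact monLT_irrefl _ (hq _ (MvPolynomial.mem_support_iff.mpr h))
  refine ⟨?_, ?_, hm21, ?_⟩
  · rw [heq, MvPolynomial.coeff_add, MvPolynomial.coeff_sub, MvPolynomial.coeff_monomial,
      MvPolynomial.coeff_monomial, if_pos rfl, if_neg hne, hq1]
    ring
  · rw [heq, MvPolynomial.coeff_add, MvPolynomial.coeff_sub, MvPolynomial.coeff_monomial,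
      MvPolynomial.coeff_monomial, if_pos rfl, if_neg (fun h => hne h.symm), hq2]
    ring
  · intro m hm h1 h2
    rw [MvPolynomial.mem_support_iff, heq, MvPolynomial.coeff_add, MvPolynomial.coeff_sub,
      MvPolynomial.coeff_monomial, MvPolynomial.coeff_monomial,
      if_neg (fun h => h1 h.symm), if_neg (fun h => h2 h.symm), sub_zero, zero_add] at hm
    exact hq m (MvPolynomial.mem_support_iff.mpr hm)
end
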